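/- arXiv:0911.4549 — 2 statements merged into one kernel-verified Lean document; each statement's English description precedes it below -/
import Mathlib

section
/- Assume the basic assumption and let 0<ρ≤ρ₀≤3. There is a constant C>1 depending only on n such that for every 0<σ<1, every z∈M_{(1−σ)ρ} and every ζ∈∂M_ρ, one has |ζⁿ−zⁿ| ≥ C⁻¹ρ²σ. -/
open Complex MeasureTheory Set
open scoped BigOperators

noncomputable section

/-- Points of `ℝ^{2n-1} ≅ ℂ^{n-1} × ℝ` (we write `m = n - 1`). -/
abbrev Pt (m : ℕ) := (Fin m → ℂ) × ℝ

/-- Points of `ℂⁿ`, written `(z', zⁿ)` with `z' ∈ ℂ^{n-1}`. -/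
abbrev Cpt (m : ℕ) := (Fin m → ℂ) × ℂ

/-- The Euclidean norm on `ℝ^{2n-1} ≅ ℂ^{n-1} × ℝ`. -/
def pnorm {m : ℕ} (ξ : Pt m) : ℝ :=
  Real.sqrt ((∑ j, ‖ξ.1 j‖ ^ 2) + ξ.2 ^ 2)

/-- The Euclidean norm on `ℂⁿ`. -/
def znorm {m : ℕ} (z : Cpt m) : ℝ :=
  Real.sqrt ((∑ j, ‖z.1 j‖ ^ 2) + ‖z.2‖ ^ 2)

/-- The Euclidean norm on `ℂ^{n-1}`. -/
def cnorm {m : ℕ} (v : Fin m → ℂ) : ℝ := Real.sqrt (∑ j, ‖v j‖ ^ 2)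

/-- The projection `π(z) = (z', Re zⁿ)`. -/
def projP {m : ℕ} (z : Cpt m) : Pt m := (z.1, z.2.re)

/-- The defining function `r(z) = -yⁿ + |z'|² + r̂(π z)`. -/
def rfn {m : ℕ} (rh : Pt m → ℝ) (z : Cpt m) : ℝ :=
  -z.2.im + (∑ j, ‖z.1 j‖ ^ 2) + rh (projP z)

/-- The hypersurface `M`: the graph `yⁿ = |z'|² + r̂(z', xⁿ)` over `D`. -/
def Mset {m : ℕ} (D : Set (Pt m)) (rh : Pt m → ℝ) : Set (Cpt m) :=
  {z | projP z ∈ D ∧ z.2.im = (∑ j, ‖z.1 j‖ ^ 2) + rh (projP z)}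

/-- `M_ρ = M ∩ {(xⁿ)² + yⁿ < ρ²}`. -/
def MRho {m : ℕ} (D : Set (Pt m)) (rh : Pt m → ℝ) (ρ : ℝ) : Set (Cpt m) :=
  {z ∈ Mset D rh | z.2.re ^ 2 + z.2.im < ρ ^ 2}

/-- `∂M_ρ = M ∩ {(xⁿ)² + yⁿ = ρ²}`. -/
def bMRho {m : ℕ} (D : Set (Pt m)) (rh : Pt m → ℝ) (ρ : ℝ) : Set (Cpt m) :=
  {z ∈ Mset D rh | z.2.re ^ 2 + z.2.im = ρ ^ 2}

/-- `D_ρ = π(M_ρ) = {(z',xⁿ) ∈ D : |z'|² + (xⁿ)² + r̂(z',xⁿ) < ρ²}`. -/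
def DRho {m : ℕ} (D : Set (Pt m)) (rh : Pt m → ℝ) (ρ : ℝ) : Set (Pt m) :=
  {ξ ∈ D | (∑ j, ‖ξ.1 j‖ ^ 2) + ξ.2 ^ 2 + rh ξ < ρ ^ 2}

/-- The open Euclidean ball `B_ρ ⊆ ℝ^{2n-1}` centered at `0`. -/
def ballP (m : ℕ) (ρ : ℝ) : Set (Pt m) := {ξ | pnorm ξ < ρ}

/-- `Σ_j ∂_{z^j} f(z) v^j = (df(z)[v] - i·df(z)[i•v])/2`, with the real Fréchet
derivative; this encodes the Wirtinger derivatives `∂_{z^j} = ½(∂_{x^j} - i ∂_{y^j})`. -/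
def wirt {m : ℕ} (f : Cpt m → ℝ) (z v : Cpt m) : ℂ :=
  (((fderiv ℝ f z v : ℝ) : ℂ) - Complex.I * ((fderiv ℝ f z ((Complex.I : ℂ) • v) : ℝ) : ℂ)) / 2

/-- `r_w·(ζ - z) = Σ_j ∂_{w^j} r(w) (ζ^j - z^j)` (derivatives of `r` taken at `w`). -/
def rdot {m : ℕ} (rh : Pt m → ℝ) (w ζ z : Cpt m) : ℂ := wirt (rfn rh) w (ζ - z)

/-- The set of values `‖∂^j r̂(x)‖`, `j ≤ 2`, `x ∈ s` (derivatives taken within `D`);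
its supremum is the `C²`-norm of `r̂` on `s`. -/
def c2Set {m : ℕ} (rh : Pt m → ℝ) (D s : Set (Pt m)) : Set ℝ :=
  {y | ∃ x ∈ s, ∃ j ≤ 2, y = ‖iteratedFDerivWithin ℝ j rh D x‖}

/-- The basic assumption: `D` is a domain, `r̂ ∈ C²(D)`, `0 < ρ₀ ≤ 3`,
`closure D_{ρ₀} ⊆ D`, `r̂(0) = 0`, `dr̂(0) = 0`, and `ε = ‖r̂‖_{C²(D_{ρ₀})} < 1/C₀`. -/
structure Basic (m : ℕ) (D : Set (Pt m)) (rh : Pt m → ℝ) (ρ₀ C₀ : ℝ) : Prop where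
  openD : IsOpen D
  connD : IsConnected D
  smooth : ContDiffOn ℝ 2 rh D
  rho0_pos : 0 < ρ₀
  rho0_le : ρ₀ ≤ 3
  closure_sub : closure (DRho D rh ρ₀) ⊆ D
  mem0 : (0 : Pt m) ∈ D
  rh0 : rh 0 = 0
  drh0 : fderivWithin ℝ rh D 0 = 0
  bdd : BddAbove (c2Set rh D (DRho D rh ρ₀))
  small : sSup (c2Set rh D (DRho D rh ρ₀)) < 1 / C₀

/-- The graph point of `M` above `ξ = (z', xⁿ)`. -/
def graphPt {m : ℕ} (rh : Pt m → ℝ) (ξ : Pt m) : Cpt m :=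
  (ξ.1, (ξ.2 : ℂ) + Complex.I * (((∑ j, ‖ξ.1 j‖ ^ 2) + rh ξ : ℝ) : ℂ))

/-- The approximate Heisenberg transformation `ψ_z(ζ) = (ζ' - z', -2i r_z·(ζ-z))`. -/
def psiMap {m : ℕ} (rh : Pt m → ℝ) (z ζ : Cpt m) : Cpt m :=
  (ζ.1 - z.1, (-2) * Complex.I * rdot rh z ζ z)

/-- `ψ̃_x(ξ) = π(ψ_z(ζ))` where `ζ, z ∈ M` lie over `ξ, x`. -/
def psiT {m : ℕ} (rh : Pt m → ℝ) (x ξ : Pt m) : Pt m :=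
  projP (psiMap rh (graphPt rh x) (graphPt rh ξ))

/-- `Ψ(ξ, x) = (ψ̃_x(ξ), x)`. -/
def PsiMap {m : ℕ} (rh : Pt m → ℝ) (p : Pt m × Pt m) : Pt m × Pt m :=
  (psiT rh p.2 p.1, p.2)

end

noncomputable section

set_option maxHeartbeats 1000000 in
/-- Under the basic assumption and `0 < ρ ≤ ρ₀ ≤ 3`, there is `C > 1`
depending only on `n = m + 1` such that for every `0 < σ < 1`, every
`z ∈ M_{(1-σ)ρ}` and every `ζ ∈ ∂M_ρ`, one has `|ζⁿ - zⁿ| ≥ C⁻¹ρ²σ`. -/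
theorem statement_4 (m : ℕ) :
    ∃ C₀ > (1 : ℝ), ∃ C > (1 : ℝ),
      ∀ (D : Set (Pt m)) (rh : Pt m → ℝ) (ρ₀ : ℝ), Basic m D rh ρ₀ C₀ →
        ∀ ρ : ℝ, 0 < ρ → ρ ≤ ρ₀ → ∀ σ : ℝ, 0 < σ → σ < 1 →
          ∀ z ∈ MRho D rh ((1 - σ) * ρ), ∀ ζ ∈ bMRho D rh ρ,
            C⁻¹ * ρ ^ 2 * σ ≤ ‖ζ.2 - z.2‖ := by
  refine ⟨2, by norm_num, 10, by norm_num, ?_⟩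
  intro D rh ρ₀ hB ρ hρ hρρ₀ σ hσ hσ1 z hz ζ hζ
  obtain ⟨⟨hzD, hzim⟩, hzlt⟩ := hz
  obtain ⟨⟨hζD, hζim⟩, hζeq⟩ := hζ
  obtain ⟨t, htdef⟩ : ∃ t, ‖ζ.2 - z.2‖ = t := ⟨_, rfl⟩
  rw [htdef]
  have ht0 : 0 ≤ t := htdef ▸ norm_nonneg _
  have hρ3 : ρ ≤ 3 := le_trans hρρ₀ hB.rho0_le
  have hsum : (0:ℝ) ≤ ∑ j, ‖z.1 j‖ ^ 2 :=
    Finset.sum_nonneg fun j _ => sq_nonneg _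
  -- projP z ∈ DRho D rh ρ₀
  have hmem : projP z ∈ DRho D rh ρ₀ := by
    refine ⟨hzD, ?_⟩
    simp only [projP] at hzim ⊢
    nlinarith [hzlt, hzim, sq_nonneg ((1-σ)*ρ), mul_nonneg (mul_nonneg hσ.le hρ.le) hρ.le,
      mul_nonneg (mul_nonneg (mul_nonneg hσ.le hσ.le) hρ.le) hρ.le, hB.rho0_pos]
  -- rh (projP z) ≥ -1
  have hrh : -1 ≤ rh (projP z) := by
    have hle : |rh (projP z)| ≤ sSup (c2Set rh D (DRho D rh ρ₀)) := by
      apply le_csSup hB.bdd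
      exact ⟨projP z, hmem, 0, by norm_num, by
        rw [norm_iteratedFDerivWithin_zero, Real.norm_eq_abs]⟩
    have hs : sSup (c2Set rh D (DRho D rh ρ₀)) < 1 / 2 := by
      have := hB.small; norm_num at this ⊢; linarith
    have habs := abs_le.mp (le_of_lt (lt_of_le_of_lt hle hs))
    linarith [habs.1]
  have hb : -1 ≤ z.2.im := by rw [hzim]; linarith
  -- bound on z.2.re
  have ha2 : z.2.re ^ 2 ≤ 16 := by
    nlinarith [hzlt, hb, sq_nonneg ((1-σ)*ρ), sq_nonneg ρ,
      mul_nonneg (mul_nonneg hσ.le hρ.le) hρ.le,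
      mul_nonneg (mul_nonneg (mul_nonneg hσ.le hσ.le) hρ.le) hρ.le]
  have ha : -4 ≤ z.2.re ∧ z.2.re ≤ 4 := by
    constructor <;> nlinarith [sq_nonneg (z.2.re + 4), sq_nonneg (z.2.re - 4)]
  have hre : |ζ.2.re - z.2.re| ≤ t := by
    rw [← htdef]
    simpa [Complex.sub_re] using Complex.abs_re_le_norm (ζ.2 - z.2)
  have him : |ζ.2.im - z.2.im| ≤ t := by
    rw [← htdef]
    simpa [Complex.sub_im] using Complex.abs_im_le_norm (ζ.2 - z.2)
  have hre1 := (abs_le.mp hre).1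
  have hre2 := (abs_le.mp hre).2
  have him1 := (abs_le.mp him).1
  have him2 := (abs_le.mp him).2
  -- key inequality
  have key : ρ ^ 2 * σ ≤ (ζ.2.re - z.2.re) * (ζ.2.re + z.2.re) + (ζ.2.im - z.2.im) := by
    nlinarith [hζeq, hzlt, mul_nonneg (mul_nonneg (sq_nonneg ρ) hσ.le)
      (by linarith : (0:ℝ) ≤ 1 - σ)]
  have hgoal : (10:ℝ)⁻¹ * ρ ^ 2 * σ = ρ ^ 2 * σ / 10 := by ring
  rw [hgoal, div_le_iff₀ (by norm_num : (0:ℝ) < 10)]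
  rcases le_or_gt 1 t with h1 | h1
  · nlinarith [mul_pos hρ hρ, hσ1.le, hσ.le]
  · -- t < 1
    have e1 : (ζ.2.re - z.2.re) ^ 2 ≤ t ^ 2 := sq_le_sq' hre1 hre2
    have e2 : z.2.re * (ζ.2.re - z.2.re) ≤ 4 * t := by
      have p1 : 0 ≤ (t - (ζ.2.re - z.2.re)) * (4 + z.2.re) :=
        mul_nonneg (by linarith) (by linarith [ha.1])
      have p2 : 0 ≤ (t + (ζ.2.re - z.2.re)) * (4 - z.2.re) :=
        mul_nonneg (by linarith) (by linarith [ha.2])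
      nlinarith [p1, p2]
    have e3 : t ^ 2 ≤ t := by nlinarith [ht0, h1]
    have expand : (ζ.2.re - z.2.re) * (ζ.2.re + z.2.re)
        = (ζ.2.re - z.2.re) ^ 2 + 2 * (z.2.re * (ζ.2.re - z.2.re)) := by ring
    linarith [key, e1, e2, e3, him2, expand.le, expand.ge]

end
end

section
/- Let D⊂ℝ^m be a bounded domain satisfying condition (i) of the cone property with constant C_*. There exist constants C₀,C>1, depending only on m and C_*, such that: if f:D→ℝ^m is of class C¹ with |f'(x)−Id|<1/C₀ for all x∈D (f' denoting the Jacobian matrix and |·| the maximum of absolute values of entries), then f is a C¹ diffeomorphism from D onto D'=f(D), one has ½|p₁−p₀| ≤ |f(p₁)−f(p₀)| ≤ 2|p₁−p₀| for all p₀,p₁∈D, and ‖f⁻¹−id‖_{D',1} ≤ C‖f−id‖_{D,1}. -/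
open Set
open scoped BigOperators Classical

noncomputable section

/-- Euclidean space `ℝ^m`. -/
abbrev E (m : ℕ) := EuclideanSpace ℝ (Fin m)

/-- The cone with vertex `0`, unit axis `v`, opening `θ` and height `h`:
`{t : v·t > θ⁻¹ |t - (v·t)v|, v·t < h}`. -/
def coneAt {m : ℕ} (v : E m) (θ h : ℝ) : Set (E m) :=
  {t | θ⁻¹ * ‖t - (inner ℝ v t : ℝ) • v‖ < (inner ℝ v t : ℝ) ∧ (inner ℝ v t : ℝ) < h}

/-- Part (i) of the cone property: `diam D < C_*`, and any two points of `D` can be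
joined by a piecewise-`C¹` curve in `D` with speed `≤ C_* |p₁ - p₀|`. -/
def ConePropI {m : ℕ} (D : Set (E m)) (Cs : ℝ) : Prop :=
  Metric.diam D < Cs ∧
  ∀ p₀ ∈ D, ∀ p₁ ∈ D, ∃ γ : ℝ → E m, ∃ F : Finset ℝ,
    γ 0 = p₀ ∧ γ 1 = p₁ ∧ ContinuousOn γ (Set.Icc 0 1) ∧
    (∀ t ∈ Set.Icc (0 : ℝ) 1, γ t ∈ D) ∧
    ∀ t ∈ Set.Icc (0 : ℝ) 1, t ∉ F →
      ∃ dγ : E m, HasDerivAt γ dγ t ∧ ‖dγ‖ ≤ Cs * ‖p₁ - p₀‖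

/-- Part (ii) of the cone property: every point of the closure of `D` is the vertex of
a cone contained in `D` with opening `> C_*⁻¹` and height `> C_*⁻¹`. -/
def ConePropII {m : ℕ} (D : Set (E m)) (Cs : ℝ) : Prop :=
  ∀ x ∈ closure D, ∃ v : E m, ‖v‖ = 1 ∧ ∃ θ > Cs⁻¹, ∃ h > Cs⁻¹,
    (fun t => x + t) '' coneAt v θ h ⊆ D

/-- The cone property with constant `C_*`. -/
def ConeProp {m : ℕ} (D : Set (E m)) (Cs : ℝ) : Prop :=
  ConePropI D Cs ∧ ConePropII D Cs

/-- The set of values `‖∂^j u(x)‖`, `j ≤ k`, `x ∈ s` (derivatives within `s`);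
its supremum is `‖u‖_{s,k}`. -/
def ckSet {m : ℕ} {F : Type*} [NormedAddCommGroup F] [NormedSpace ℝ F]
    (f : E m → F) (s : Set (E m)) (k : ℕ) : Set ℝ :=
  {r | ∃ j ≤ k, ∃ x ∈ s, r = ‖iteratedFDerivWithin ℝ j f s x‖}

/-- The set of Hölder ratios `‖f x - f y‖ / |x - y|^α`, `x ≠ y` in `s`;
its supremum is the seminorm `|f|_{s,α}`. -/
def hratioSet {m : ℕ} {G : Type*} [NormedAddCommGroup G]
    (f : E m → G) (s : Set (E m)) (α : ℝ) : Set ℝ :=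
  {r | ∃ x ∈ s, ∃ y ∈ s, x ≠ y ∧ r = ‖f x - f y‖ / ‖x - y‖ ^ α}

/-- The defining set of the Hölder norm `‖u‖_{s,a}`: for integer `a` the values of
derivatives of order `≤ a`; otherwise, in addition, the Hölder-`(a - ⌊a⌋)` ratios of
the derivatives of order `⌊a⌋`. -/
def hNormSet {m : ℕ} {F : Type*} [NormedAddCommGroup F] [NormedSpace ℝ F]
    (f : E m → F) (s : Set (E m)) (a : ℝ) : Set ℝ :=
  if a = (⌊a⌋ : ℝ) then ckSet f s ⌊a⌋.toNat
  else ckSet f s ⌊a⌋.toNat ∪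
    hratioSet (iteratedFDerivWithin ℝ ⌊a⌋.toNat f s) s (a - (⌊a⌋ : ℝ))

/-- The Hölder norm `‖u‖_{s,a}`. -/
def hNorm {m : ℕ} {F : Type*} [NormedAddCommGroup F] [NormedSpace ℝ F]
    (f : E m → F) (s : Set (E m)) (a : ℝ) : ℝ :=
  sSup (hNormSet f s a)

/-- The defining set of the Hölder seminorm `|u|_{s,a}` for `k < a ≤ k+1`,
`k = ⌈a⌉ - 1`: the Hölder-`(a-k)` ratios of the derivatives of order `k`. -/
def hSemiSet {m : ℕ} {F : Type*} [NormedAddCommGroup F] [NormedSpace ℝ F]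
    (f : E m → F) (s : Set (E m)) (a : ℝ) : Set ℝ :=
  hratioSet (iteratedFDerivWithin ℝ (⌈a⌉ - 1).toNat f s) s (a - ((⌈a⌉ : ℝ) - 1))

/-- The Hölder seminorm `|u|_{s,a}`. -/
def hSemi {m : ℕ} {F : Type*} [NormedAddCommGroup F] [NormedSpace ℝ F]
    (f : E m → F) (s : Set (E m)) (a : ℝ) : ℝ :=
  sSup (hSemiSet f s a)

end

noncomputable section


open Filter in
/-- MVT-type bound on a segment, with derivative information only at interior points. -/
theorem seg_mvt' {E' : Type*} [NormedAddCommGroup E'] [NormedSpace ℝ E'] {g : ℝ → E'}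
    {a b K : ℝ} (hab : a ≤ b) (hK : 0 ≤ K) (hg : ContinuousOn g (Icc a b))
    (hd : ∀ t ∈ Ioo a b, ∃ d, HasDerivAt g d t ∧ ‖d‖ ≤ K) :
    ‖g b - g a‖ ≤ K * (b - a) := by
  rcases eq_or_lt_of_le hab with rfl | hlt
  · simp
  set f' : ℝ → E' := fun t => if h : t ∈ Ioo a b then (hd t h).choose else 0 with hf'
  have step : ∀ a' ∈ Ioo a b, ‖g b - g a'‖ ≤ K * (b - a') := by
    intro a' ha'
    have h1 : ContinuousOn g (Icc a' b) := hg.mono (Icc_subset_Icc ha'.1.le le_rfl)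
    have h2 : ∀ t ∈ Ico a' b, HasDerivWithinAt g (f' t) (Ici t) t := by
      intro t ht
      have htI : t ∈ Ioo a b := ⟨lt_of_lt_of_le ha'.1 ht.1, ht.2⟩
      have := (hd t htI).choose_spec.1
      rw [hf']; simp only [dif_pos htI]
      exact this.hasDerivWithinAt
    have h3 : ∀ t ∈ Ico a' b, ‖f' t‖ ≤ K := by
      intro t ht
      have htI : t ∈ Ioo a b := ⟨lt_of_lt_of_le ha'.1 ht.1, ht.2⟩
      rw [hf']; simp only [dif_pos htI]
      exact (hd t htI).choose_spec.2
    exact norm_image_sub_le_of_norm_deriv_right_le_segment h1 h2 h3 b ⟨ha'.2.le, le_rfl⟩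
  have hne : (nhdsWithin a (Ioo a b)).NeBot := by
    rw [nhdsWithin_Ioo_eq_nhdsGT hlt]; infer_instance
  have t1 : Filter.Tendsto (fun a' => ‖g b - g a'‖) (nhdsWithin a (Ioo a b))
      (nhds ‖g b - g a‖) := by
    have : Filter.Tendsto g (nhdsWithin a (Ioo a b)) (nhds (g a)) :=
      (hg a ⟨le_rfl, hab⟩).mono_left (nhdsWithin_mono a Ioo_subset_Icc_self)
    exact (Filter.Tendsto.sub tendsto_const_nhds this).norm
  have t2 : Filter.Tendsto (fun a' => K * (b - a')) (nhdsWithin a (Ioo a b))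
      (nhds (K * (b - a))) := by
    apply Filter.Tendsto.mono_left _ nhdsWithin_le_nhds
    exact (tendsto_const_nhds.sub tendsto_id).const_mul K
  exact le_of_tendsto_of_tendsto t1 t2
    (Filter.eventually_inf_principal.2 (Filter.Eventually.of_forall step))

/-- MVT-type bound on a segment, allowing a finite exceptional set. -/
theorem piece_mvt' {E' : Type*} [NormedAddCommGroup E'] [NormedSpace ℝ E']
    (F : Finset ℝ) : ∀ {g : ℝ → E'} {a b K : ℝ}, a ≤ b → 0 ≤ K →
    ContinuousOn g (Icc a b) →
    (∀ t ∈ Ioo a b, t ∉ F → ∃ d, HasDerivAt g d t ∧ ‖d‖ ≤ K) →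
    ‖g b - g a‖ ≤ K * (b - a) := by
  classical
  induction F using Finset.induction_on with
  | empty =>
    intro g a b K hab hK hg hd
    exact seg_mvt' hab hK hg fun t ht => hd t ht (Finset.notMem_empty t)
  | insert _ _ hc IH =>
    rename_i c F'
    intro g a b K hab hK hg hd
    by_cases hcm : c ∈ Ioo a b
    · have h1 : ‖g c - g a‖ ≤ K * (c - a) := by
        apply IH hcm.1.le hK (hg.mono (Icc_subset_Icc le_rfl hcm.2.le))
        intro t ht htF
        refine hd t ⟨ht.1, ht.2.trans hcm.2⟩ ?_
        simp only [Finset.mem_insert, not_or]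
        exact ⟨ne_of_lt ht.2, htF⟩
      have h2 : ‖g b - g c‖ ≤ K * (b - c) := by
        apply IH hcm.2.le hK (hg.mono (Icc_subset_Icc hcm.1.le le_rfl))
        intro t ht htF
        refine hd t ⟨hcm.1.trans ht.1, ht.2⟩ ?_
        simp only [Finset.mem_insert, not_or]
        exact ⟨(ne_of_lt ht.1).symm, htF⟩
      calc ‖g b - g a‖ ≤ ‖g b - g c‖ + ‖g c - g a‖ := norm_sub_le_norm_sub_add_norm_sub _ _ _
        _ ≤ K * (b - c) + K * (c - a) := add_le_add h2 h1
        _ = K * (b - a) := by ring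
    · apply IH hab hK hg
      intro t ht htF
      refine hd t ht ?_
      simp only [Finset.mem_insert, not_or]
      exact ⟨fun h => hcm (h ▸ ht), htF⟩

/-- Key estimate: integrate the derivative bound along a curve provided by the cone property. -/
theorem key_est' {m : ℕ} {D : Set (E m)} {f : E m → E m} {Cs C₀ : ℝ}
    (hD : IsOpen D) (hCP : ConePropI D Cs) (hC₀ : 0 < C₀)
    (hf : ContDiffOn ℝ 1 f D)
    (hder : ∀ x ∈ D, ‖fderiv ℝ f x - ContinuousLinearMap.id ℝ (E m)‖ ≤ 1 / C₀) :
    ∀ p₀ ∈ D, ∀ p₁ ∈ D,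
      ‖(f p₁ - p₁) - (f p₀ - p₀)‖ ≤ (Cs / C₀) * ‖p₁ - p₀‖ := by
  intro p₀ hp₀ p₁ hp₁
  obtain ⟨γ, F, hγ0, hγ1, hγc, hγD, hγd⟩ := hCP.2 p₀ hp₀ p₁ hp₁
  have hCs0 : 0 < Cs := lt_of_le_of_lt Metric.diam_nonneg hCP.1
  set K : ℝ := (1 / C₀) * (Cs * ‖p₁ - p₀‖) with hKdef
  have hK : 0 ≤ K := by positivity
  have hg : ContinuousOn (fun t => f (γ t) - γ t) (Icc 0 1) :=
    (hf.continuousOn.comp hγc hγD).sub hγc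
  have hd : ∀ t ∈ Ioo (0:ℝ) 1, t ∉ F →
      ∃ d, HasDerivAt (fun t => f (γ t) - γ t) d t ∧ ‖d‖ ≤ K := by
    intro t ht htF
    obtain ⟨dγ, hdγ, hbnd⟩ := hγd t (Ioo_subset_Icc_self ht) htF
    have hx : γ t ∈ D := hγD t (Ioo_subset_Icc_self ht)
    have hfd : DifferentiableAt ℝ f (γ t) :=
      (hf.contDiffAt (hD.mem_nhds hx)).differentiableAt one_ne_zero
    have h1 : HasDerivAt (fun s => f (γ s)) (fderiv ℝ f (γ t) dγ) t :=
      hfd.hasFDerivAt.comp_hasDerivAt t hdγ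
    refine ⟨fderiv ℝ f (γ t) dγ - dγ, h1.sub hdγ, ?_⟩
    have heq : fderiv ℝ f (γ t) dγ - dγ
        = (fderiv ℝ f (γ t) - ContinuousLinearMap.id ℝ (E m)) dγ := by simp
    rw [heq, hKdef]
    calc ‖(fderiv ℝ f (γ t) - ContinuousLinearMap.id ℝ (E m)) dγ‖
        ≤ ‖fderiv ℝ f (γ t) - ContinuousLinearMap.id ℝ (E m)‖ * ‖dγ‖ :=
          ContinuousLinearMap.le_opNorm _ _
      _ ≤ (1 / C₀) * (Cs * ‖p₁ - p₀‖) := by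
          apply mul_le_mul (hder _ hx) hbnd (norm_nonneg _)
          positivity
  have hmain := piece_mvt' F (zero_le_one) hK hg hd
  rw [hγ0, hγ1] at hmain
  calc ‖(f p₁ - p₁) - (f p₀ - p₀)‖ ≤ K * (1 - 0) := hmain
    _ = (Cs / C₀) * ‖p₁ - p₀‖ := by rw [hKdef]; ring

/-- Norm of first iterated derivative within an open set. -/
theorem norm_itfd_one' {m : ℕ} {u : E m → E m} {s : Set (E m)} (hs : IsOpen s)
    {x : E m} (hx : x ∈ s) :
    ‖iteratedFDerivWithin ℝ 1 u s x‖ = ‖fderiv ℝ u x‖ := by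
  rw [iteratedFDerivWithin_of_isOpen 1 hs hx]
  rw [show (1:ℕ) = 0 + 1 from rfl, ← norm_iteratedFDeriv_fderiv, norm_iteratedFDeriv_zero]

/-- Bound for the inverse of a near-identity operator. -/
theorem inv_sub_id_bound' {m : ℕ} (e : (E m) ≃L[ℝ] (E m))
    (hu : ‖(e : (E m) →L[ℝ] (E m)) - ContinuousLinearMap.id ℝ (E m)‖ ≤ 1/2) :
    ‖((e.symm : (E m) →L[ℝ] (E m))) - ContinuousLinearMap.id ℝ (E m)‖ ≤
      2 * ‖(e : (E m) →L[ℝ] (E m)) - ContinuousLinearMap.id ℝ (E m)‖ := by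
  set A := (e : (E m) →L[ℝ] (E m)) with hA
  set B := (e.symm : (E m) →L[ℝ] (E m)) with hB
  have hBA : B.comp A = ContinuousLinearMap.id ℝ (E m) := by
    ext v; simp [hA, hB]
  have hkey : B - ContinuousLinearMap.id ℝ (E m)
      = B.comp (ContinuousLinearMap.id ℝ (E m) - A) := by
    rw [ContinuousLinearMap.comp_sub, hBA, ContinuousLinearMap.comp_id]
  have h1 : ‖B - ContinuousLinearMap.id ℝ (E m)‖ ≤
      ‖B‖ * ‖ContinuousLinearMap.id ℝ (E m) - A‖ := by
    rw [hkey]; exact ContinuousLinearMap.opNorm_comp_le _ _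
  have h2 : ‖B‖ ≤ ‖B - ContinuousLinearMap.id ℝ (E m)‖ + 1 := by
    calc ‖B‖ = ‖(B - ContinuousLinearMap.id ℝ (E m)) + ContinuousLinearMap.id ℝ (E m)‖ := by
          congr 1; abel
      _ ≤ ‖B - ContinuousLinearMap.id ℝ (E m)‖ + ‖ContinuousLinearMap.id ℝ (E m)‖ :=
          norm_add_le _ _
      _ ≤ ‖B - ContinuousLinearMap.id ℝ (E m)‖ + 1 := by
          have := ContinuousLinearMap.norm_id_le (E := E m) (𝕜 := ℝ)
          linarith
  have h3 : ‖ContinuousLinearMap.id ℝ (E m) - A‖ = ‖A - ContinuousLinearMap.id ℝ (E m)‖ :=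
    norm_sub_rev _ _
  rw [h3] at h1
  have h4 : 0 ≤ ‖A - ContinuousLinearMap.id ℝ (E m)‖ := norm_nonneg _
  nlinarith [mul_le_mul_of_nonneg_right h2 h4]

/-- Lemma on near-identity `C¹` maps.  If `D` is a bounded domain
satisfying part (i) of the cone property with constant `C_*`, there are `C₀, C > 1`
depending only on `m, C_*` such that any `C¹` map `f : D → ℝ^m` with `|f' - Id| < 1/C₀`
on `D` is a `C¹`-diffeomorphism onto its image, satisfies
`½|p₁-p₀| ≤ |f(p₁)-f(p₀)| ≤ 2|p₁-p₀|`, and `‖f⁻¹ - id‖_{f(D),1} ≤ C ‖f - id‖_{D,1}`. -/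
theorem statement_9 (m : ℕ) (Cs : ℝ) (hCs : 1 < Cs) :
    ∃ C₀ > (1 : ℝ), ∃ C > (1 : ℝ),
      ∀ (D : Set (E m)) (f : E m → E m),
        IsOpen D → IsConnected D → Bornology.IsBounded D →
        ConePropI D Cs →
        ContDiffOn ℝ 1 f D →
        (∀ x ∈ D, ‖fderivWithin ℝ f D x - ContinuousLinearMap.id ℝ (E m)‖ < 1 / C₀) →
        -- f is a C¹ diffeomorphism from D onto D' = f(D)
        (Set.InjOn f D ∧ IsOpen (f '' D) ∧
          ContDiffOn ℝ 1 (Function.invFunOn f D) (f '' D) ∧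
          (∀ y ∈ f '' D, f (Function.invFunOn f D y) = y) ∧
          (∀ x ∈ D, Function.invFunOn f D (f x) = x)) ∧
        -- bi-Lipschitz bounds
        (∀ p₀ ∈ D, ∀ p₁ ∈ D,
            (1 / 2) * ‖p₁ - p₀‖ ≤ ‖f p₁ - f p₀‖ ∧ ‖f p₁ - f p₀‖ ≤ 2 * ‖p₁ - p₀‖) ∧
        -- C¹ bound for the inverse
        hNorm (fun y => Function.invFunOn f D y - y) (f '' D) 1 ≤
          C * hNorm (fun x => f x - x) D 1 := by
  classical
  have hCs0 : (0:ℝ) < Cs := by linarith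
  refine ⟨2*Cs, by linarith, 2, one_lt_two, ?_⟩
  intro D f hD hconn hbdd hCP hf hder
  have hC₀ : (0:ℝ) < 2*Cs := by linarith
  -- derivative bounds in terms of `fderiv`
  have hder' : ∀ x ∈ D, ‖fderiv ℝ f x - ContinuousLinearMap.id ℝ (E m)‖ < 1/(2*Cs) := by
    intro x hx
    have := hder x hx
    rwa [fderivWithin_of_isOpen hD hx] at this
  have hderle : ∀ x ∈ D, ‖fderiv ℝ f x - ContinuousLinearMap.id ℝ (E m)‖ ≤ 1/(2*Cs) :=
    fun x hx => (hder' x hx).le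
  have hhalf : (1:ℝ)/(2*Cs) ≤ 1/2 := by
    apply div_le_div_of_nonneg_left one_pos.le (by norm_num) (by linarith)
  -- the key contraction estimate
  have key : ∀ p₀ ∈ D, ∀ p₁ ∈ D,
      ‖(f p₁ - p₁) - (f p₀ - p₀)‖ ≤ (1/2) * ‖p₁ - p₀‖ := by
    intro p₀ h0 p₁ h1
    have h := key_est' hD hCP hC₀ hf hderle p₀ h0 p₁ h1
    have hq : Cs / (2*Cs) = 1/2 := by field_simp
    rwa [hq] at h
  -- bi-Lipschitz bounds
  have bilip : ∀ p₀ ∈ D, ∀ p₁ ∈ D,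
      (1/2) * ‖p₁ - p₀‖ ≤ ‖f p₁ - f p₀‖ ∧ ‖f p₁ - f p₀‖ ≤ 2 * ‖p₁ - p₀‖ := by
    intro p₀ h0 p₁ h1
    have hk := key p₀ h0 p₁ h1
    have hre : ‖(p₁ - p₀) - (f p₁ - f p₀)‖ = ‖(f p₁ - p₁) - (f p₀ - p₀)‖ := by
      rw [← norm_neg]; congr 1; abel
    constructor
    · have h5 := norm_sub_norm_le (p₁ - p₀) (f p₁ - f p₀)
      rw [hre] at h5
      linarith
    · have h2 : f p₁ - f p₀ = ((f p₁ - p₁) - (f p₀ - p₀)) + (p₁ - p₀) := by abel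
      calc ‖f p₁ - f p₀‖ ≤ ‖(f p₁ - p₁) - (f p₀ - p₀)‖ + ‖p₁ - p₀‖ := by
            rw [h2]; exact norm_add_le _ _
        _ ≤ 2 * ‖p₁ - p₀‖ := by linarith [norm_nonneg (p₁ - p₀)]
  -- injectivity
  have hinj : Set.InjOn f D := by
    intro p₀ h0 p₁ h1 hfe
    have hb := (bilip p₀ h0 p₁ h1).1
    have h0' : ‖f p₁ - f p₀‖ = 0 := by rw [hfe]; simp
    have : ‖p₁ - p₀‖ ≤ 0 := by linarith
    have : p₁ - p₀ = 0 := by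
      have := le_antisymm this (norm_nonneg _)
      exact norm_eq_zero.mp this
    have := sub_eq_zero.mp this
    exact this.symm
  -- invertible derivatives
  have hEx : ∀ x ∈ D, ∃ e : (E m) ≃L[ℝ] (E m),
      ((e : (E m) →L[ℝ] (E m)) = fderiv ℝ f x) := by
    intro x hx
    have hsmall := hder' x hx
    have hlt1 : ‖(1 : (E m) →L[ℝ] (E m)) - fderiv ℝ f x‖ < 1 := by
      have h1 : ((1 : (E m) →L[ℝ] (E m)) : (E m) →L[ℝ] (E m))
          = ContinuousLinearMap.id ℝ (E m) := rfl
      rw [h1, norm_sub_rev]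
      have : (1:ℝ)/(2*Cs) < 1 := by
        rw [div_lt_one (by linarith)]; linarith
      linarith
    set u := Units.oneSub ((1 : (E m) →L[ℝ] (E m)) - fderiv ℝ f x) hlt1 with hu
    have huval : (u : (E m) →L[ℝ] (E m)) = fderiv ℝ f x := by
      rw [hu, Units.val_oneSub, sub_sub_cancel]
    have hcoe : ((ContinuousLinearEquiv.ofUnit u : (E m) ≃L[ℝ] (E m)) : (E m) →L[ℝ] (E m))
        = (u : (E m) →L[ℝ] (E m)) := ContinuousLinearMap.ext fun v => rfl
    exact ⟨ContinuousLinearEquiv.ofUnit u, hcoe.trans huval⟩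
  -- strict differentiability with invertible derivative
  have hstrictAll : ∀ x ∈ D, ∀ (e : (E m) ≃L[ℝ] (E m)),
      ((e : (E m) →L[ℝ] (E m)) = fderiv ℝ f x) →
      HasStrictFDerivAt f (e : (E m) →L[ℝ] (E m)) x := by
    intro x hx e he
    have hcd : ContDiffAt ℝ 1 f x := hf.contDiffAt (hD.mem_nhds hx)
    have hfd : DifferentiableAt ℝ f x := hcd.differentiableAt one_ne_zero
    have hA' : HasFDerivAt f (e : (E m) →L[ℝ] (E m)) x := he ▸ hfd.hasFDerivAt
    exact hcd.hasStrictFDerivAt' hA' one_ne_zero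
  -- open image
  have hD'open : IsOpen (f '' D) := by
    rw [isOpen_iff_mem_nhds]
    rintro y ⟨x, hx, rfl⟩
    obtain ⟨e, he⟩ := hEx x hx
    have hstrict := hstrictAll x hx e he
    rw [← hstrict.map_nhds_eq_of_equiv]
    exact Filter.mem_map.2 (Filter.mem_of_superset (hD.mem_nhds hx)
      (Set.subset_preimage_image f D))
  set g := Function.invFunOn f D with hgdef
  have hrinv : ∀ y ∈ f '' D, f (g y) = y := by
    rintro y ⟨x, hx, rfl⟩
    exact Function.invFunOn_eq ⟨x, hx, rfl⟩
  have hlinv : ∀ x ∈ D, g (f x) = x := fun x hx => hinj.leftInvOn_invFunOn hx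
  have hgD : ∀ y ∈ f '' D, g y ∈ D := by
    rintro y ⟨x, hx, rfl⟩
    exact Function.invFunOn_mem ⟨x, hx, rfl⟩
  -- regularity of the inverse
  have hgCD : ∀ x ∈ D, ContDiffAt ℝ 1 g (f x) := by
    intro x hx
    obtain ⟨e, he⟩ := hEx x hx
    have hcd : ContDiffAt ℝ 1 f x := hf.contDiffAt (hD.mem_nhds hx)
    have hfd : DifferentiableAt ℝ f x := hcd.differentiableAt one_ne_zero
    have hA' : HasFDerivAt f (e : (E m) →L[ℝ] (E m)) x := he ▸ hfd.hasFDerivAt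
    have hstrict := hstrictAll x hx e he
    have hev : ∀ᶠ x' in nhds x, g (f x') = x' := by
      filter_upwards [hD.mem_nhds hx] with x' hx' using hlinv x' hx'
    have hLI : ContDiffAt ℝ 1 (hstrict.localInverse f e x) (f x) :=
      hcd.to_localInverse hA' one_ne_zero
    exact hLI.congr_of_eventuallyEq (hstrict.localInverse_unique hev)
  have hgCDOn : ContDiffOn ℝ 1 g (f '' D) := by
    rintro y ⟨x, hx, rfl⟩
    exact (hgCD x hx).contDiffWithinAt
  -- derivative of the inverse
  have hgderiv : ∀ x ∈ D, ∀ (e : (E m) ≃L[ℝ] (E m)),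
      ((e : (E m) →L[ℝ] (E m)) = fderiv ℝ f x) →
      HasFDerivAt g (e.symm : (E m) →L[ℝ] (E m)) (f x) := by
    intro x hx e he
    have hstrict := hstrictAll x hx e he
    have hev : ∀ᶠ x' in nhds x, g (f x') = x' := by
      filter_upwards [hD.mem_nhds hx] with x' hx' using hlinv x' hx'
    exact (hstrict.to_local_left_inverse hev).hasFDerivAt
  refine ⟨⟨hinj, hD'open, hgCDOn, hrinv, hlinv⟩, fun p₀ h0 p₁ h1 => bilip p₀ h0 p₁ h1, ?_⟩
  -- the Hölder norm estimate
  obtain ⟨x₀, hx₀⟩ := hconn.nonempty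
  have hnormeq : ∀ (u : E m → E m) (s : Set (E m)),
      hNorm u s 1 = sSup (ckSet u s 1) := by
    intro u s
    unfold hNorm hNormSet
    norm_num
  rw [hnormeq, hnormeq]
  set S := ckSet (fun x => f x - x) D 1 with hSdef
  have hfdh : ∀ x ∈ D, fderiv ℝ (fun x => f x - x) x
      = fderiv ℝ f x - ContinuousLinearMap.id ℝ (E m) := by
    intro x hx
    have hfd : DifferentiableAt ℝ f x :=
      (hf.contDiffAt (hD.mem_nhds hx)).differentiableAt one_ne_zero
    exact (hfd.hasFDerivAt.sub (hasFDerivAt_id x)).fderiv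
  have hmem0 : ∀ x ∈ D, ‖f x - x‖ ∈ S := by
    intro x hx
    refine ⟨0, Nat.zero_le 1, x, hx, ?_⟩
    rw [norm_iteratedFDerivWithin_zero]
  have hmem1 : ∀ x ∈ D, ‖fderiv ℝ f x - ContinuousLinearMap.id ℝ (E m)‖ ∈ S := by
    intro x hx
    refine ⟨1, le_rfl, x, hx, ?_⟩
    rw [norm_itfd_one' hD hx, hfdh x hx]
  have hSbdd : BddAbove S := by
    refine ⟨‖f x₀ - x₀‖ + Cs + 1, ?_⟩
    rintro r ⟨j, hj, x, hx, rfl⟩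
    interval_cases j
    · rw [norm_iteratedFDerivWithin_zero]
      have hk := key x₀ hx₀ x hx
      have hdist : ‖x - x₀‖ ≤ Cs := by
        rw [← dist_eq_norm]
        exact le_of_lt (lt_of_le_of_lt (Metric.dist_le_diam_of_mem hbdd hx hx₀) hCP.1)
      have : ‖f x - x‖ ≤ ‖f x₀ - x₀‖ + ‖(f x - x) - (f x₀ - x₀)‖ := by
        have := norm_add_le ((f x - x) - (f x₀ - x₀)) (f x₀ - x₀)
        calc ‖f x - x‖ = ‖((f x - x) - (f x₀ - x₀)) + (f x₀ - x₀)‖ := by congr 1; abel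
          _ ≤ ‖(f x - x) - (f x₀ - x₀)‖ + ‖f x₀ - x₀‖ := norm_add_le _ _
          _ = ‖f x₀ - x₀‖ + ‖(f x - x) - (f x₀ - x₀)‖ := by ring
      linarith
    · rw [norm_itfd_one' hD hx, hfdh x hx]
      have h1 := hderle x hx
      have hn : (0:ℝ) ≤ ‖f x₀ - x₀‖ := norm_nonneg _
      have : (1:ℝ)/(2*Cs) ≤ 1 := le_trans hhalf (by norm_num)
      linarith
  have hS0 : (0:ℝ) ≤ sSup S :=
    le_trans (norm_nonneg _) (le_csSup hSbdd (hmem0 x₀ hx₀))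
  apply Real.sSup_le
  · rintro r ⟨j, hj, y, hy, rfl⟩
    obtain ⟨x, hx, rfl⟩ := hy
    interval_cases j
    · rw [norm_iteratedFDerivWithin_zero]
      have : g (f x) - f x = -(f x - x) := by rw [hlinv x hx]; abel
      rw [this, norm_neg]
      have := le_csSup hSbdd (hmem0 x hx)
      linarith
    · rw [norm_itfd_one' hD'open (Set.mem_image_of_mem f hx)]
      obtain ⟨e, he⟩ := hEx x hx
      have hgd := hgderiv x hx e he
      have hfd' : fderiv ℝ (fun y => g y - y) (f x)
          = (e.symm : (E m) →L[ℝ] (E m)) - ContinuousLinearMap.id ℝ (E m) :=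
        (hgd.sub (hasFDerivAt_id (f x))).fderiv
      rw [hfd']
      have hb := inv_sub_id_bound' e (by rw [he]; exact le_trans (hderle x hx) hhalf)
      rw [he] at hb
      have hmem := le_csSup hSbdd (hmem1 x hx)
      linarith
  · linarith

end
end
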